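/- Let X be a set of feasible evaluations. Then X is a uniform possibility domain if and only if X admits a ternary aggregator every component of which is a weak near-unanimity operation. -/

import Mathlib

/-- A set of feasible evaluations: every projection has at least two elements. -/
def Feasible {m : ℕ} {A : Fin m → Type*} (X : Set (∀ j, A j)) : Prop :=
  ∀ j, ∃ z ∈ X, ∃ z' ∈ X, z j ≠ z' j

/-- An `n`-ary aggregator for a set `X` of feasible evaluations. -/
def IsAggregator {m : ℕ} {A : Fin m → Type*} {n : ℕ} (X : Set (∀ j, A j))
    (f : ∀ j, (Fin n → A j) → A j) : Prop :=
  (∀ j (x : Fin n → A j), ∃ i, f j x = x i) ∧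
  (∀ xs : Fin n → (∀ j, A j), (∀ i, xs i ∈ X) → (fun j => f j (fun i => xs i j)) ∈ X)

/-- An `n`-ary tuple of operations is dictatorial on `X` if, on tuples from `X`,
each component acts as the projection on a common coordinate `d`. -/
def IsDictatorial {m : ℕ} {A : Fin m → Type*} {n : ℕ} (X : Set (∀ j, A j))
    (f : ∀ j, (Fin n → A j) → A j) : Prop :=
  ∃ d : Fin n, ∀ xs : Fin n → (∀ j, A j), (∀ i, xs i ∈ X) →
    ∀ j, f j (fun i => xs i j) = xs d j

/-- `X` is a possibility domain: it admits a non-dictatorial aggregator of some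
arity `n ≥ 2`. -/
def IsPossibilityDomain {m : ℕ} {A : Fin m → Type*} (X : Set (∀ j, A j)) : Prop :=
  ∃ n : ℕ, 2 ≤ n ∧ ∃ f : ∀ j, (Fin n → A j) → A j,
    IsAggregator X f ∧ ¬ IsDictatorial X f

/-- An `n`-ary aggregator is uniform non-dictatorial on `X` if, for every issue `j` and
every two-element subset `{a,b}` of the `j`-th projection of `X`, the restriction of its
`j`-th component to `{a,b}ⁿ` differs from every projection. -/
def IsUniformNonDict {m : ℕ} {A : Fin m → Type*} {n : ℕ} (X : Set (∀ j, A j))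
    (f : ∀ j, (Fin n → A j) → A j) : Prop :=
  ∀ j, ∀ a b : A j, a ≠ b → (∃ z ∈ X, z j = a) → (∃ z ∈ X, z j = b) →
    ∀ d : Fin n, ∃ x : Fin n → A j, (∀ i, x i = a ∨ x i = b) ∧ f j x ≠ x d

/-- `X` is a uniform possibility domain: it admits a uniform non-dictatorial aggregator
of some arity `n ≥ 2`. -/
def IsUniformPossibilityDomain {m : ℕ} {A : Fin m → Type*} (X : Set (∀ j, A j)) : Prop :=
  ∃ n : ℕ, 2 ≤ n ∧ ∃ f : ∀ j, (Fin n → A j) → A j,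
    IsAggregator X f ∧ IsUniformNonDict X f

/-- A ternary weak near-unanimity operation. -/
def IsWNUOp {B : Type*} (g : (Fin 3 → B) → B) : Prop :=
  ∀ x y : B, g ![y, x, x] = g ![x, y, x] ∧ g ![x, y, x] = g ![x, x, y]


section UPDAux

variable {m : ℕ} {A : Fin m → Type*}

/-- The ternary projection-on-first-coordinate aggregator. -/
def P0 : ∀ j, (Fin 3 → A j) → A j := fun _ v => v 0

/-- Cyclic "diamond" composition of two ternary aggregators. -/
def dia (f g : ∀ j, (Fin 3 → A j) → A j) : ∀ j, (Fin 3 → A j) → A j :=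
  fun j v => f j (fun k => g j (fun i => v (i + k)))

/-- A minor of an aggregator. -/
def Mnr {n k : ℕ} (σ : Fin n → Fin k) (F : ∀ j, (Fin n → A j) → A j) :
    ∀ j, (Fin k → A j) → A j :=
  fun j v => F j (fun i => v (σ i))

/-- `f` is weak-near-unanimity at issue `j` on the pair `{a,b}`. -/
def WNUat (j : Fin m) (a b : A j) (f : ∀ j, (Fin 3 → A j) → A j) : Prop :=
  ∀ x y : A j, (x = a ∨ x = b) → (y = a ∨ y = b) →
    f j ![y,x,x] = f j ![x,y,x] ∧ f j ![x,y,x] = f j ![x,x,y]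

theorem rot0 {α : Type*} (p q r : α) : (fun i : Fin 3 => ![p,q,r] (i+0)) = ![p,q,r] := by
  funext i; fin_cases i <;> rfl

theorem rot1 {α : Type*} (p q r : α) : (fun i : Fin 3 => ![p,q,r] (i+1)) = ![q,r,p] := by
  funext i; fin_cases i <;> rfl

theorem rot2 {α : Type*} (p q r : α) : (fun i : Fin 3 => ![p,q,r] (i+2)) = ![r,p,q] := by
  funext i; fin_cases i <;> rfl

theorem const3 {α : Type*} (c : α) : ![c,c,c] = fun _ : Fin 3 => c := by
  funext i; fin_cases i <;> rfl

variable {X : Set (∀ j, A j)}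

theorem agg_P0 : IsAggregator X (P0 (A := A)) :=
  ⟨fun _ _ => ⟨0, rfl⟩, fun xs h => h 0⟩

theorem agg_Mnr {n k : ℕ} {σ : Fin n → Fin k} {F : ∀ j, (Fin n → A j) → A j}
    (hF : IsAggregator X F) : IsAggregator X (Mnr σ F) := by
  constructor
  · intro j x
    obtain ⟨i, hi⟩ := hF.1 j (fun i => x (σ i))
    exact ⟨σ i, hi⟩
  · intro xs hxs
    exact hF.2 (fun i => xs (σ i)) (fun i => hxs _)

theorem agg_dia {f g : ∀ j, (Fin 3 → A j) → A j} (hf : IsAggregator X f)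
    (hg : IsAggregator X g) : IsAggregator X (dia f g) := by
  constructor
  · intro j v
    obtain ⟨k, hk⟩ := hf.1 j (fun k => g j (fun i => v (i + k)))
    obtain ⟨i, hi⟩ := hg.1 j (fun i => v (i + k))
    exact ⟨i + k, hk.trans hi⟩
  · intro xs hxs
    exact hf.2 (fun k j => g j (fun i => xs (i + k) j))
      (fun k => hg.2 (fun i => xs (i + k)) (fun i => hxs _))

theorem agg_idem {n : ℕ} {F : ∀ j, (Fin n → A j) → A j} (hF : IsAggregator X F)
    (j : Fin m) (c : A j) : F j (fun _ => c) = c := by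
  obtain ⟨i, hi⟩ := hF.1 j (fun _ => c); exact hi

theorem dia_apply (f g : ∀ j, (Fin 3 → A j) → A j) (j : Fin m) (v : Fin 3 → A j) :
    dia f g j v =
      f j ![g j (fun i => v (i+0)), g j (fun i => v (i+1)), g j (fun i => v (i+2))] := by
  unfold dia; congr 1; funext k; fin_cases k <;> rfl

theorem wnu_cyc {j : Fin m} {a b : A j} {f : ∀ j, (Fin 3 → A j) → A j}
    (hf : WNUat j a b f) : ∀ p q r : A j, (p = a ∨ p = b) → (q = a ∨ q = b) →
      (r = a ∨ r = b) → f j ![p,q,r] = f j ![q,r,p] := by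
  intro p q r hp hq hr
  rcases hp with h | h <;> rcases hq with h' | h' <;> rcases hr with h'' | h'' <;>
    rw [h, h', h'']
  · exact ((hf a b (Or.inl rfl) (Or.inr rfl)).2).symm
  · exact ((hf a b (Or.inl rfl) (Or.inr rfl)).1).symm
  · exact (hf b a (Or.inr rfl) (Or.inl rfl)).1.trans (hf b a (Or.inr rfl) (Or.inl rfl)).2
  · exact (hf a b (Or.inl rfl) (Or.inr rfl)).1.trans (hf a b (Or.inl rfl) (Or.inr rfl)).2
  · exact ((hf b a (Or.inr rfl) (Or.inl rfl)).1).symm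
  · exact ((hf b a (Or.inr rfl) (Or.inl rfl)).2).symm

theorem wnu_dia_left {j : Fin m} {a b : A j} {f g : ∀ j, (Fin 3 → A j) → A j}
    (hg : IsAggregator X g) (hf : WNUat j a b f) : WNUat j a b (dia f g) := by
  intro x y hx hy
  have pm : ∀ v : Fin 3 → A j, (∀ i, v i = a ∨ v i = b) → g j v = a ∨ g j v = b := by
    intro v hv
    obtain ⟨i, hi⟩ := hg.1 j v
    rw [hi]; exact hv i
  have hyxx : ∀ i : Fin 3, (![y,x,x]) i = a ∨ (![y,x,x]) i = b := by
    intro i; fin_cases i <;> first | exact hy | exact hx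
  have hxyx : ∀ i : Fin 3, (![x,y,x]) i = a ∨ (![x,y,x]) i = b := by
    intro i; fin_cases i <;> first | exact hy | exact hx
  have hxxy : ∀ i : Fin 3, (![x,x,y]) i = a ∨ (![x,x,y]) i = b := by
    intro i; fin_cases i <;> first | exact hy | exact hx
  have hu := pm _ hyxx
  have hv' := pm _ hxyx
  have hw := pm _ hxxy
  have e1 : dia f g j ![y,x,x] =
      f j ![g j ![y,x,x], g j ![x,x,y], g j ![x,y,x]] := by
    rw [dia_apply, rot0, rot1, rot2]
  have e2 : dia f g j ![x,y,x] =
      f j ![g j ![x,y,x], g j ![y,x,x], g j ![x,x,y]] := by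
    rw [dia_apply, rot0, rot1, rot2]
  have e3 : dia f g j ![x,x,y] =
      f j ![g j ![x,x,y], g j ![x,y,x], g j ![y,x,x]] := by
    rw [dia_apply, rot0, rot1, rot2]
  constructor
  · rw [e1, e2]
    exact (wnu_cyc hf _ _ _ hu hw hv').trans (wnu_cyc hf _ _ _ hw hv' hu)
  · rw [e2, e3]
    exact (wnu_cyc hf _ _ _ hv' hu hw).trans (wnu_cyc hf _ _ _ hu hw hv')

theorem wnu_dia_right {j : Fin m} {a b : A j} {f g : ∀ j, (Fin 3 → A j) → A j}
    (hf : IsAggregator X f) (hg : WNUat j a b g) : WNUat j a b (dia f g) := by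
  intro x y hx hy
  obtain ⟨h1, h2⟩ := hg x y hx hy
  have d1 : dia f g j ![y,x,x] = g j ![x,y,x] := by
    rw [dia_apply, rot0, rot1, rot2, h1, ← h2, const3]
    exact agg_idem hf j _
  have d2 : dia f g j ![x,y,x] = g j ![x,y,x] := by
    rw [dia_apply, rot0, rot1, rot2, h1, ← h2, const3]
    exact agg_idem hf j _
  have d3 : dia f g j ![x,x,y] = g j ![x,y,x] := by
    rw [dia_apply, rot0, rot1, rot2, h1, ← h2, const3]
    exact agg_idem hf j _
  exact ⟨d1.trans d2.symm, d2.trans d3.symm⟩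

theorem wnu_of_vals {g : ∀ j, (Fin 3 → A j) → A j} (j : Fin m) (a b : A j) {p q : A j}
    (h1 : g j ![b,a,a] = p) (h2 : g j ![a,b,a] = p) (h3 : g j ![a,a,b] = p)
    (h4 : g j ![a,b,b] = q) (h5 : g j ![b,a,b] = q) (h6 : g j ![b,b,a] = q) :
    WNUat j a b g := by
  intro x y hx hy
  rcases hx with h | h <;> rcases hy with h' | h' <;> rw [h, h']
  · exact ⟨rfl, rfl⟩
  · exact ⟨h1.trans h2.symm, h2.trans h3.symm⟩
  · exact ⟨h4.trans h5.symm, h5.trans h6.symm⟩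
  · exact ⟨rfl, rfl⟩

theorem col2 (u w : ∀ j, A j) (l : Fin m) :
    (fun i : Fin 2 => ![u, w] i l) = ![u l, w l] := by
  funext i; fin_cases i <;> rfl

theorem col3 (u v w : ∀ j, A j) (l : Fin m) :
    (fun i : Fin 3 => ![u, v, w] i l) = ![u l, v l, w l] := by
  funext i; fin_cases i <;> rfl

theorem agg_comp211 {G : ∀ l, (Fin 2 → A l) → A l} (hG : IsAggregator X G) :
    IsAggregator X (fun l (v : Fin 3 → A l) => G l ![v 0, G l ![v 1, v 2]]) := by
  constructor
  · intro l v
    obtain ⟨i2, hi2⟩ := hG.1 l ![v 1, v 2]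
    obtain ⟨i1, hi1⟩ := hG.1 l ![v 0, G l ![v 1, v 2]]
    fin_cases i1
    · exact ⟨0, hi1⟩
    · fin_cases i2
      · exact ⟨1, hi1.trans hi2⟩
      · exact ⟨2, hi1.trans hi2⟩
  · intro xs hxs
    have hw : (fun l => G l ![xs 1 l, xs 2 l]) ∈ X := by
      have := hG.2 ![xs 1, xs 2] (by intro i; fin_cases i <;> exact hxs _)
      simpa only [col2] using this
    have := hG.2 ![xs 0, fun l => G l ![xs 1 l, xs 2 l]]
      (by intro i; fin_cases i <;> first | exact hxs _ | exact hw)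
    simpa only [col2] using this

theorem agg_sandwich {P : ∀ l, (Fin 3 → A l) → A l} (hP : IsAggregator X P) :
    IsAggregator X (fun l (v : Fin 3 → A l) => P l ![v 0, P l v, v 2]) := by
  constructor
  · intro l v
    obtain ⟨k, hk⟩ := hP.1 l ![v 0, P l v, v 2]
    fin_cases k
    · exact ⟨0, hk⟩
    · obtain ⟨i, hi⟩ := hP.1 l v
      exact ⟨i, hk.trans hi⟩
    · exact ⟨2, hk⟩
  · intro xs hxs
    have hw : (fun l => P l fun i => xs i l) ∈ X := hP.2 xs hxs
    have := hP.2 ![xs 0, (fun l => P l fun i => xs i l), xs 2]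
      (by intro i; fin_cases i <;> first | exact hxs _ | exact hw)
    simpa only [col3] using this

/-- the `{a,b}`-valued vector whose coordinates in `T` are `a` and others `b`. -/
def ev {n : ℕ} {α : Type*} (a b : α) (T : Finset (Fin n)) : Fin n → α :=
  fun i => if i ∈ T then a else b

theorem step1 {n : ℕ} {F : ∀ j, (Fin n → A j) → A j}
    (hF : IsAggregator X F) (j : Fin m) (a b : A j) (hab : a ≠ b)
    (hund : ∀ d : Fin n, ∃ x : Fin n → A j, (∀ i, x i = a ∨ x i = b) ∧ F j x ≠ x d) :
    ∃ g : ∀ j, (Fin 3 → A j) → A j, IsAggregator X g ∧ WNUat j a b g := by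
  classical
  have dich : ∀ T : Finset (Fin n), F j (ev a b T) = a ∨ F j (ev a b T) = b := by
    intro T
    obtain ⟨i, hi⟩ := hF.1 j (ev a b T)
    rw [hi]
    by_cases h : i ∈ T
    · exact Or.inl (if_pos h)
    · exact Or.inr (if_neg h)
  have hU : F j (ev a b Finset.univ) = a := by
    have : ev (n := n) a b Finset.univ = fun _ => a :=
      funext fun i => if_pos (Finset.mem_univ i)
    rw [this]; exact agg_idem hF j a
  have hE : F j (ev a b (∅ : Finset (Fin n))) = b := by
    have : ev (n := n) a b ∅ = fun _ => b :=
      funext fun i => if_neg (Finset.notMem_empty i)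
    rw [this]; exact agg_idem hF j b
  by_cases hA : ∃ T : Finset (Fin n), F j (ev a b T) = F j (ev a b Tᶜ)
  · -- Case A : "semilattice-type" behaviour on the pair
    obtain ⟨T, hT⟩ := hA
    set σ : Fin n → Fin 2 := fun i => if i ∈ T then 0 else 1 with hσ
    set c := F j (ev a b T) with hc
    have gab : Mnr σ F j ![a, b] = c := by
      refine (congrArg (F j) (funext fun i => ?_)).trans rfl
      by_cases h : i ∈ T <;> simp [Mnr, hσ, ev, h]
    have gba : Mnr σ F j ![b, a] = c := by
      have e : Mnr σ F j ![b, a] = F j (ev a b Tᶜ) :=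
        congrArg (F j) (funext fun i => by
          by_cases h : i ∈ T <;> simp [Mnr, hσ, ev, h, Finset.mem_compl])
      rw [e]; exact hT.symm
    have gaa : Mnr σ F j ![a, a] = a := by
      have e : Mnr σ F j ![a, a] = F j (fun _ => a) :=
        congrArg (F j) (funext fun i => by by_cases h : i ∈ T <;> simp [Mnr, hσ, h])
      rw [e]; exact agg_idem hF j a
    have gbb : Mnr σ F j ![b, b] = b := by
      have e : Mnr σ F j ![b, b] = F j (fun _ => b) :=
        congrArg (F j) (funext fun i => by by_cases h : i ∈ T <;> simp [Mnr, hσ, h])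
      rw [e]; exact agg_idem hF j b
    refine ⟨fun l v => Mnr σ F l ![v 0, Mnr σ F l ![v 1, v 2]],
      agg_comp211 (agg_Mnr hF), ?_⟩
    rcases dich T with hcv | hcv
    · -- c = a
      have gab' : Mnr σ F j ![a, b] = a := gab.trans hcv
      have gba' : Mnr σ F j ![b, a] = a := gba.trans hcv
      refine wnu_of_vals j a b (p := a) (q := a) ?_ ?_ ?_ ?_ ?_ ?_
      · show Mnr σ F j ![b, Mnr σ F j ![a, a]] = a
        rw [gaa, gba']
      · show Mnr σ F j ![a, Mnr σ F j ![b, a]] = a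
        rw [gba', gaa]
      · show Mnr σ F j ![a, Mnr σ F j ![a, b]] = a
        rw [gab', gaa]
      · show Mnr σ F j ![a, Mnr σ F j ![b, b]] = a
        rw [gbb, gab']
      · show Mnr σ F j ![b, Mnr σ F j ![a, b]] = a
        rw [gab', gba']
      · show Mnr σ F j ![b, Mnr σ F j ![b, a]] = a
        rw [gba', gba']
    · -- c = b
      have gab' : Mnr σ F j ![a, b] = b := gab.trans hcv
      have gba' : Mnr σ F j ![b, a] = b := gba.trans hcv
      refine wnu_of_vals j a b (p := b) (q := b) ?_ ?_ ?_ ?_ ?_ ?_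
      · show Mnr σ F j ![b, Mnr σ F j ![a, a]] = b
        rw [gaa, gba']
      · show Mnr σ F j ![a, Mnr σ F j ![b, a]] = b
        rw [gba', gab']
      · show Mnr σ F j ![a, Mnr σ F j ![a, b]] = b
        rw [gab', gab']
      · show Mnr σ F j ![a, Mnr σ F j ![b, b]] = b
        rw [gbb, gab']
      · show Mnr σ F j ![b, Mnr σ F j ![a, b]] = b
        rw [gab', gbb]
      · show Mnr σ F j ![b, Mnr σ F j ![b, a]] = b
        rw [gba', gbb]
  · -- Case B : self-dual on the pair
    push_neg at hA
    have sd : ∀ T : Finset (Fin n), F j (ev a b T) = a → F j (ev a b Tᶜ) = b :=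
      fun T h => (dich Tᶜ).resolve_left (fun h' => hA T (h.trans h'.symm))
    have sd' : ∀ T : Finset (Fin n), F j (ev a b T) = b → F j (ev a b Tᶜ) = a :=
      fun T h => (dich Tᶜ).resolve_right (fun h' => hA T (h.trans h'.symm))
    by_cases hM : ∀ T T' : Finset (Fin n), T ⊆ T' → F j (ev a b T) = a →
        F j (ev a b T') = a
    · -- B1 : monotone, get majority
      have hsing : ∀ d : Fin n, F j (ev a b {d}) = b := by
        intro d
        by_contra hdb
        have hda : F j (ev a b {d}) = a := (dich _).resolve_right hdb
        obtain ⟨x, hx, hne⟩ := hund d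
        set T : Finset (Fin n) := Finset.univ.filter (fun i => x i = a) with hTdef
        have hxT : x = ev a b T := by
          funext i
          by_cases h : x i = a
          · rw [h]; simp [ev, hTdef, h]
          · have hb : x i = b := (hx i).resolve_left h
            rw [hb]; simp [ev, hTdef, h]
        have key : F j (ev a b T) = ev a b T d := by
          by_cases hd : d ∈ T
          · have hsub : ({d} : Finset (Fin n)) ⊆ T := by
              simpa [Finset.singleton_subset_iff] using hd
            rw [show ev a b T d = a from if_pos hd]
            exact hM _ _ hsub hda
          · have hTc : T ⊆ ({d} : Finset (Fin n))ᶜ := by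
              intro i hi
              simp only [Finset.mem_compl, Finset.mem_singleton]
              rintro rfl; exact hd hi
            rw [show ev a b T d = b from if_neg hd]
            rcases dich T with h | h
            · exfalso
              have h1 := hM _ _ hTc h
              rw [sd _ hda] at h1
              exact hab h1.symm
            · exact h
        rw [hxT] at hne; exact hne key
      obtain ⟨M, hMa, hMmin⟩ : ∃ M : Finset (Fin n), F j (ev a b M) = a ∧
          ∀ S : Finset (Fin n), F j (ev a b S) = a → M.card ≤ S.card := by
        obtain ⟨M, hMmem, hmin⟩ := Finset.exists_min_image
          (Finset.univ.filter fun T : Finset (Fin n) => F j (ev a b T) = a)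
          Finset.card ⟨Finset.univ, by simp [hU]⟩
        exact ⟨M, (Finset.mem_filter.mp hMmem).2, fun S hS => hmin S (by simp [hS])⟩
      have hMne : M.Nonempty := by
        rcases Finset.eq_empty_or_nonempty M with h | h
        · rw [h, hE] at hMa; exact absurd hMa.symm hab
        · exact h
      obtain ⟨d, hdM⟩ := hMne
      set s : Fin n → Fin 3 := fun i => if i = d then 0 else if i ∈ M then 1 else 2
        with hs
      have hS1 : F j (ev a b {d}) = b := hsing d
      have hS2 : F j (ev a b (M.erase d)) = b := by
        rcases dich (M.erase d) with h | h
        · exfalso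
          have h1 := hMmin _ h
          have h2 : (M.erase d).card < M.card := Finset.card_erase_lt_of_mem hdM
          omega
        · exact h
      have hS3 : F j (ev a b Mᶜ) = b := sd _ hMa
      have hS1' : F j (ev a b ({d} : Finset (Fin n))ᶜ) = a := sd' _ hS1
      have hS2' : F j (ev a b (M.erase d)ᶜ) = a := sd' _ hS2
      refine ⟨Mnr s F, agg_Mnr hF, ?_⟩
      refine wnu_of_vals j a b (p := a) (q := b) ?_ ?_ ?_ ?_ ?_ ?_
      · -- ![b,a,a] ↦ {d}ᶜ
        refine (congrArg (F j) (funext fun i => ?_)).trans hS1'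
        by_cases h1 : i = d
        · subst h1; simp [Mnr, hs, ev]
        · by_cases h2 : i ∈ M <;> simp [Mnr, hs, ev, h1, h2]
      · -- ![a,b,a] ↦ (M.erase d)ᶜ
        refine (congrArg (F j) (funext fun i => ?_)).trans hS2'
        by_cases h1 : i = d
        · subst h1; simp [Mnr, hs, ev]
        · by_cases h2 : i ∈ M <;> simp [Mnr, hs, ev, h1, h2, Finset.mem_erase]
      · -- ![a,a,b] ↦ M
        refine (congrArg (F j) (funext fun i => ?_)).trans hMa
        by_cases h1 : i = d
        · subst h1; simp [Mnr, hs, ev, hdM]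
        · by_cases h2 : i ∈ M <;> simp [Mnr, hs, ev, h1, h2]
      · -- ![a,b,b] ↦ {d}
        refine (congrArg (F j) (funext fun i => ?_)).trans hS1
        by_cases h1 : i = d
        · subst h1; simp [Mnr, hs, ev]
        · by_cases h2 : i ∈ M <;> simp [Mnr, hs, ev, h1, h2]
      · -- ![b,a,b] ↦ M.erase d
        refine (congrArg (F j) (funext fun i => ?_)).trans hS2
        by_cases h1 : i = d
        · subst h1; simp [Mnr, hs, ev]
        · by_cases h2 : i ∈ M <;> simp [Mnr, hs, ev, h1, h2, Finset.mem_erase]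
      · -- ![b,b,a] ↦ Mᶜ
        refine (congrArg (F j) (funext fun i => ?_)).trans hS3
        by_cases h1 : i = d
        · subst h1; simp [Mnr, hs, ev, hdM]
        · by_cases h2 : i ∈ M <;> simp [Mnr, hs, ev, h1, h2]
    · -- B2 : not monotone
      push_neg at hM
      obtain ⟨T, T', hsub, hTa, hT'⟩ := hM
      have hT'b : F j (ev a b T') = b := (dich T').resolve_left hT'
      set s : Fin n → Fin 3 := fun i => if i ∈ T then 0 else if i ∈ T' then 1 else 2
        with hs
      -- values of the ternary minor ψ = Mnr s F on the pair
      have eabb : Mnr s F j ![a,b,b] = F j (ev a b T) :=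
        congrArg (F j) (funext fun i => by
          by_cases h1 : i ∈ T
          · simp [Mnr, hs, ev, h1]
          · by_cases h2 : i ∈ T' <;> simp [Mnr, hs, ev, h1, h2])
      have ebab : Mnr s F j ![b,a,b] = F j (ev a b (T' \ T)) :=
        congrArg (F j) (funext fun i => by
          by_cases h1 : i ∈ T
          · simp [Mnr, hs, ev, h1, Finset.mem_sdiff]
          · by_cases h2 : i ∈ T' <;> simp [Mnr, hs, ev, h1, h2, Finset.mem_sdiff])
      have ebba : Mnr s F j ![b,b,a] = F j (ev a b T'ᶜ) :=
        congrArg (F j) (funext fun i => by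
          by_cases h1 : i ∈ T
          · simp [Mnr, hs, ev, h1, hsub h1]
          · by_cases h2 : i ∈ T' <;> simp [Mnr, hs, ev, h1, h2])
      have ebaa : Mnr s F j ![b,a,a] = F j (ev a b Tᶜ) :=
        congrArg (F j) (funext fun i => by
          by_cases h1 : i ∈ T
          · simp [Mnr, hs, ev, h1]
          · by_cases h2 : i ∈ T' <;> simp [Mnr, hs, ev, h1, h2])
      have eaba : Mnr s F j ![a,b,a] = F j (ev a b (T' \ T)ᶜ) :=
        congrArg (F j) (funext fun i => by
          by_cases h1 : i ∈ T
          · simp [Mnr, hs, ev, h1, Finset.mem_sdiff]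
          · by_cases h2 : i ∈ T' <;> simp [Mnr, hs, ev, h1, h2, Finset.mem_sdiff])
      have eaab : Mnr s F j ![a,a,b] = F j (ev a b T') :=
        congrArg (F j) (funext fun i => by
          by_cases h1 : i ∈ T
          · simp [Mnr, hs, ev, h1, hsub h1]
          · by_cases h2 : i ∈ T' <;> simp [Mnr, hs, ev, h1, h2])
      have vabb : Mnr s F j ![a,b,b] = a := eabb.trans hTa
      have vbba : Mnr s F j ![b,b,a] = a := ebba.trans (sd' _ hT'b)
      have vbaa : Mnr s F j ![b,a,a] = b := ebaa.trans (sd _ hTa)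
      have vaab : Mnr s F j ![a,a,b] = b := eaab.trans hT'b
      rcases dich (T' \ T) with hc | hc
      · -- minority
        refine ⟨Mnr s F, agg_Mnr hF, ?_⟩
        refine wnu_of_vals j a b (p := b) (q := a) vbaa
          (eaba.trans (sd _ hc)) vaab vabb (ebab.trans hc) vbba
      · -- maj(x, ¬y, z) : sandwich composition
        have vbab : Mnr s F j ![b,a,b] = b := ebab.trans hc
        have vaba : Mnr s F j ![a,b,a] = a := eaba.trans (sd' _ hc)
        have vaaa : Mnr s F j ![a,a,a] = a := by
          have e : Mnr s F j ![a,a,a] = F j (fun _ => a) :=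
            congrArg (F j) (funext fun i => by
              by_cases h1 : i ∈ T
              · simp [Mnr, hs, h1]
              · by_cases h2 : i ∈ T' <;> simp [Mnr, hs, h1, h2])
          rw [e]; exact agg_idem hF j a
        have vbbb : Mnr s F j ![b,b,b] = b := by
          have e : Mnr s F j ![b,b,b] = F j (fun _ => b) :=
            congrArg (F j) (funext fun i => by
              by_cases h1 : i ∈ T
              · simp [Mnr, hs, h1]
              · by_cases h2 : i ∈ T' <;> simp [Mnr, hs, h1, h2])
          rw [e]; exact agg_idem hF j b
        refine ⟨fun l v => Mnr s F l ![v 0, Mnr s F l v, v 2],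
          agg_sandwich (agg_Mnr hF), ?_⟩
        refine wnu_of_vals j a b (p := a) (q := b) ?_ ?_ ?_ ?_ ?_ ?_
        · show Mnr s F j ![b, Mnr s F j ![b,a,a], a] = a
          rw [vbaa, vbba]
        · show Mnr s F j ![a, Mnr s F j ![a,b,a], a] = a
          rw [vaba, vaaa]
        · show Mnr s F j ![a, Mnr s F j ![a,a,b], b] = a
          rw [vaab, vabb]
        · show Mnr s F j ![a, Mnr s F j ![a,b,b], b] = b
          rw [vabb, vaab]
        · show Mnr s F j ![b, Mnr s F j ![b,a,b], b] = b
          rw [vbab, vbbb]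
        · show Mnr s F j ![b, Mnr s F j ![b,b,a], a] = b
          rw [vbba, vbaa]

end UPDAux

/-- `X` is a uniform possibility domain iff `X` admits a ternary aggregator every
component of which is a weak near-unanimity operation. -/
theorem statement_19 {m : ℕ} (hm : 1 ≤ m) {A : Fin m → Type*} [∀ j, Fintype (A j)]
    (hA : ∀ j, 2 ≤ Fintype.card (A j))
    (X : Set (∀ j, A j)) (hX : Feasible X) :
    IsUniformPossibilityDomain X ↔
      (∃ f : ∀ j, (Fin 3 → A j) → A j, IsAggregator X f ∧ ∀ j, IsWNUOp (f j)) := by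
  classical
  constructor
  · rintro ⟨n, hn2, F, hFagg, hFund⟩
    -- choose, for every (issue, pair), a ternary aggregator WNU at that pair
    have exg : ∀ t : (Σ j : Fin m, A j × A j), ∃ g : ∀ j, (Fin 3 → A j) → A j,
        IsAggregator X g ∧
        ((t.2.1 ≠ t.2.2 ∧ (∃ z ∈ X, z t.1 = t.2.1) ∧ (∃ z ∈ X, z t.1 = t.2.2)) →
          WNUat t.1 t.2.1 t.2.2 g) := by
      rintro ⟨j, a, b⟩
      by_cases hv : a ≠ b ∧ (∃ z ∈ X, z j = a) ∧ (∃ z ∈ X, z j = b)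
      · obtain ⟨hab, ha, hb⟩ := hv
        obtain ⟨g, hg1, hg2⟩ := step1 hFagg j a b hab
          (fun d => hFund j a b hab ha hb d)
        exact ⟨g, hg1, fun _ => hg2⟩
      · exact ⟨P0, agg_P0, fun h => absurd h hv⟩
    choose gt hgt1 hgt2 using exg
    -- combine them all by iterated diamond composition
    have combP : ∀ L : List (Σ j : Fin m, A j × A j),
        IsAggregator X (L.foldr (fun t acc => dia acc (gt t)) P0) ∧
        ∀ t ∈ L, (t.2.1 ≠ t.2.2 ∧ (∃ z ∈ X, z t.1 = t.2.1) ∧ (∃ z ∈ X, z t.1 = t.2.2)) →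
          WNUat t.1 t.2.1 t.2.2 (L.foldr (fun t acc => dia acc (gt t)) P0) := by
      intro L
      induction L with
      | nil => exact ⟨agg_P0, by simp⟩
      | cons t L ih =>
        refine ⟨agg_dia ih.1 (hgt1 t), ?_⟩
        intro s hs hvs
        rcases List.mem_cons.mp hs with rfl | hs'
        · exact wnu_dia_right ih.1 (hgt2 s hvs)
        · exact wnu_dia_left (hgt1 t) (ih.2 s hs' hvs)
    set L0 := (Finset.univ : Finset (Σ j : Fin m, A j × A j)).toList with hL0
    set g0 := L0.foldr (fun t acc => dia acc (gt t)) P0 with hg0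
    have hg0agg : IsAggregator X g0 := (combP L0).1
    have hg0wnu : ∀ (j : Fin m) (a b : A j), a ≠ b → (∃ z ∈ X, z j = a) →
        (∃ z ∈ X, z j = b) → WNUat j a b g0 := by
      intro j a b hab ha hb
      exact (combP L0).2 ⟨j, a, b⟩ (Finset.mem_toList.mpr (Finset.mem_univ _))
        ⟨hab, ha, hb⟩
    -- patch off the realized part
    refine ⟨fun j v => if h : ∀ i, ∃ z ∈ X, z j = v i then g0 j v
      else (if v 1 = v 2 then v 1 else v 0), ?_, ?_⟩
    · constructor
      · intro j v
        by_cases h : ∀ i, ∃ z ∈ X, z j = v i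
        · obtain ⟨i, hi⟩ := hg0agg.1 j v
          refine ⟨i, ?_⟩
          show (if h : ∀ i, ∃ z ∈ X, z j = v i then g0 j v
            else (if v 1 = v 2 then v 1 else v 0)) = v i
          rw [dif_pos h]; exact hi
        · by_cases h12 : v 1 = v 2
          · refine ⟨1, ?_⟩
            show (if h : ∀ i, ∃ z ∈ X, z j = v i then g0 j v
              else (if v 1 = v 2 then v 1 else v 0)) = v 1
            rw [dif_neg h, if_pos h12]
          · refine ⟨0, ?_⟩
            show (if h : ∀ i, ∃ z ∈ X, z j = v i then g0 j v
              else (if v 1 = v 2 then v 1 else v 0)) = v 0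
            rw [dif_neg h, if_neg h12]
      · intro xs hxs
        have hcol : ∀ (j : Fin m) (i : Fin 3), ∃ z ∈ X, z j = xs i j :=
          fun j i => ⟨xs i, hxs i, rfl⟩
        have e : (fun j => if h : ∀ i, ∃ z ∈ X, z j = xs i j
              then g0 j (fun i => xs i j)
              else (if xs 1 j = xs 2 j then xs 1 j else xs 0 j)) =
            (fun j => g0 j (fun i => xs i j)) :=
          funext fun j => dif_pos (hcol j)
        exact Set.mem_of_eq_of_mem e (hg0agg.2 xs hxs)
    · intro j x y
      by_cases hxy : x = y
      · subst hxy; exact ⟨rfl, rfl⟩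
      · by_cases hr : (∃ z ∈ X, z j = x) ∧ (∃ z ∈ X, z j = y)
        · have hcond : ∀ (v : Fin 3 → A j), (∀ i, v i = x ∨ v i = y) →
              ∀ i, ∃ z ∈ X, z j = v i := by
            intro v hv i
            rcases hv i with h | h
            · rw [h]; exact hr.1
            · rw [h]; exact hr.2
          have e1 : (if h : ∀ i, ∃ z ∈ X, z j = (![y,x,x]) i then g0 j ![y,x,x]
              else (if (![y,x,x]) 1 = (![y,x,x]) 2 then (![y,x,x]) 1 else (![y,x,x]) 0))
              = g0 j ![y,x,x] :=
            dif_pos (hcond _ (by intro i; fin_cases i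
              <;> first | exact Or.inr rfl | exact Or.inl rfl))
          have e2 : (if h : ∀ i, ∃ z ∈ X, z j = (![x,y,x]) i then g0 j ![x,y,x]
              else (if (![x,y,x]) 1 = (![x,y,x]) 2 then (![x,y,x]) 1 else (![x,y,x]) 0))
              = g0 j ![x,y,x] :=
            dif_pos (hcond _ (by intro i; fin_cases i
              <;> first | exact Or.inr rfl | exact Or.inl rfl))
          have e3 : (if h : ∀ i, ∃ z ∈ X, z j = (![x,x,y]) i then g0 j ![x,x,y]
              else (if (![x,x,y]) 1 = (![x,x,y]) 2 then (![x,x,y]) 1 else (![x,x,y]) 0))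
              = g0 j ![x,x,y] :=
            dif_pos (hcond _ (by intro i; fin_cases i
              <;> first | exact Or.inr rfl | exact Or.inl rfl))
          have hw := hg0wnu j x y hxy hr.1 hr.2 x y (Or.inl rfl) (Or.inr rfl)
          exact ⟨e1.trans (hw.1.trans e2.symm), e2.trans (hw.2.trans e3.symm)⟩
        · have hbad : ∀ (v : Fin 3 → A j), v 0 = x ∨ v 1 = x → (∃ i', v i' = y) →
              ¬ ∀ i, ∃ z ∈ X, z j = v i := by
            intro v hvx hvy hall
            apply hr
            obtain ⟨i', hi'⟩ := hvy
            rcases hvx with h | h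
            · exact ⟨h ▸ hall 0, hi' ▸ hall i'⟩
            · exact ⟨h ▸ hall 1, hi' ▸ hall i'⟩
          have e1 : (if h : ∀ i, ∃ z ∈ X, z j = (![y,x,x]) i then g0 j ![y,x,x]
              else (if (![y,x,x]) 1 = (![y,x,x]) 2 then (![y,x,x]) 1 else (![y,x,x]) 0))
              = x := by
            rw [dif_neg (hbad _ (Or.inr rfl) ⟨0, rfl⟩)]
            simp
          have e2 : (if h : ∀ i, ∃ z ∈ X, z j = (![x,y,x]) i then g0 j ![x,y,x]
              else (if (![x,y,x]) 1 = (![x,y,x]) 2 then (![x,y,x]) 1 else (![x,y,x]) 0))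
              = x := by
            rw [dif_neg (hbad _ (Or.inl rfl) ⟨1, rfl⟩)]
            simp [fun h : y = x => hxy h.symm]
            exact if_neg (fun h : y = x => hxy h.symm)
          have e3 : (if h : ∀ i, ∃ z ∈ X, z j = (![x,x,y]) i then g0 j ![x,x,y]
              else (if (![x,x,y]) 1 = (![x,x,y]) 2 then (![x,x,y]) 1 else (![x,x,y]) 0))
              = x := by
            rw [dif_neg (hbad _ (Or.inl rfl) ⟨2, rfl⟩)]
            simp [hxy]
          exact ⟨e1.trans e2.symm, e2.trans e3.symm⟩
  · rintro ⟨f, hfa, hws⟩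
    refine ⟨3, by norm_num, f, hfa, ?_⟩
    intro j a b hab ha hb d
    obtain ⟨h1, h2⟩ := hws j a b
    have hmem : ∀ i : Fin 3, (![b,a,a]) i = a ∨ (![b,a,a]) i = b := by
      intro i; fin_cases i
      · exact Or.inr rfl
      · exact Or.inl rfl
      · exact Or.inl rfl
    have hmem2 : ∀ i : Fin 3, (![a,b,a]) i = a ∨ (![a,b,a]) i = b := by
      intro i; fin_cases i
      · exact Or.inl rfl
      · exact Or.inr rfl
      · exact Or.inl rfl
    have hmem3 : ∀ i : Fin 3, (![a,a,b]) i = a ∨ (![a,a,b]) i = b := by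
      intro i; fin_cases i
      · exact Or.inl rfl
      · exact Or.inl rfl
      · exact Or.inr rfl
    have hc : f j ![b,a,a] = a ∨ f j ![b,a,a] = b := by
      obtain ⟨i, hi⟩ := hfa.1 j ![b,a,a]
      rw [hi]; exact hmem i
    rcases hc with hca | hcb
    · fin_cases d
      · exact ⟨![b,a,a], hmem, by
          show f j ![b,a,a] ≠ b; rw [hca]; exact hab⟩
      · exact ⟨![a,b,a], hmem2, by
          show f j ![a,b,a] ≠ b; rw [← h1, hca]; exact hab⟩
      · exact ⟨![a,a,b], hmem3, by
          show f j ![a,a,b] ≠ b; rw [← h2, ← h1, hca]; exact hab⟩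
    · fin_cases d
      · exact ⟨![a,b,a], hmem2, by
          show f j ![a,b,a] ≠ a; rw [← h1, hcb]; exact hab.symm⟩
      · exact ⟨![b,a,a], hmem, by
          show f j ![b,a,a] ≠ a; rw [hcb]; exact hab.symm⟩
      · exact ⟨![b,a,a], hmem, by
          show f j ![b,a,a] ≠ a; rw [hcb]; exact hab.symm⟩
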